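/- Let δ ∈ [0,1], t ≥ 0, and m_0, m_1, m_2 ≥ 0 be reals satisfying m_0 ≥ t·δ, m_2 ≥ t·(1−δ), and m_0·m_2 ≥ t·(1−δ)·m_0 + t·δ·m_2. Let M = diag(m_0, m_1, m_2) be the 3×3 diagonal matrix and let ψ = √δ·(e_0 ⊗ e_0) + √(1−δ)·(e_2 ⊗ e_2) ∈ ℂ⁹ (indexed by Fin 3 × Fin 3). Then the 9×9 matrix (I₃ ⊗ M) − t·ψψ† is positive semidefinite, where I₃ is the 3×3 identity and ⊗ is the Kronecker product. -/

import Mathlib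

open Matrix Kronecker
open scoped ComplexOrder
set_option maxHeartbeats 1000000

lemma quadaux (p q P a1 a2 b1 b2 : ℝ) (hp : 0 ≤ p) (hq : 0 ≤ q) (hP : 0 ≤ P) (h : P^2 ≤ p*q) :
    2*P*(a1*b1 + a2*b2) ≤ p*(a1^2+a2^2) + q*(b1^2+b2^2) := by
  rcases eq_or_lt_of_le hp with h0 | hp'
  · have hP0 : P = 0 := by nlinarith
    subst hP0
    nlinarith [sq_nonneg a1, sq_nonneg a2, sq_nonneg b1, sq_nonneg b2]
  · nlinarith [sq_nonneg (p*a1 - P*b1), sq_nonneg (p*a2 - P*b2),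
      mul_nonneg (sub_nonneg.2 h) (add_nonneg (sq_nonneg b1) (sq_nonneg b2)), hp'.le]

/-- Feasibility of the dual constraints `I₃ ⊗ M ⪰ t·|ψ⟩⟨ψ|` for a diagonal
matrix `M = diag(m₀, m₁, m₂)` and `ψ = √δ·e₀⊗e₀ + √(1-δ)·e₂⊗e₂`. -/
theorem stmt_3 (δ t m0 m1 m2 : ℝ) (hδ0 : 0 ≤ δ) (hδ1 : δ ≤ 1) (ht : 0 ≤ t)
    (h0 : 0 ≤ m0) (h1 : 0 ≤ m1) (h2 : 0 ≤ m2)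
    (c1 : m0 ≥ t * δ) (c2 : m2 ≥ t * (1 - δ))
    (c3 : m0 * m2 ≥ t * (1 - δ) * m0 + t * δ * m2) :
    let M : Matrix (Fin 3) (Fin 3) ℂ := Matrix.diagonal ![(m0 : ℂ), (m1 : ℂ), (m2 : ℂ)]
    let ψ : Fin 3 × Fin 3 → ℂ := fun p =>
      if p.1 = 0 ∧ p.2 = 0 then (Real.sqrt δ : ℂ)
      else if p.1 = 2 ∧ p.2 = 2 then (Real.sqrt (1 - δ) : ℂ) else 0
    ((1 : Matrix (Fin 3) (Fin 3) ℂ) ⊗ₖ M -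
      (t : ℂ) • Matrix.vecMulVec ψ (star ψ)).PosSemidef := by
  intro M ψ
  have hd1 : (0:ℝ) ≤ 1 - δ := by linarith
  have hs : Real.sqrt δ ^ 2 = δ := Real.sq_sqrt hδ0
  have hs' : Real.sqrt (1-δ) ^ 2 = 1-δ := Real.sq_sqrt hd1
  rw [Matrix.posSemidef_iff_dotProduct_mulVec]
  constructor
  · apply Matrix.IsHermitian.sub
    · show _ᴴ = _
      ext ⟨i,j⟩ ⟨k,l⟩
      simp only [Matrix.conjTranspose_apply, kroneckerMap_apply, Matrix.one_apply,
        Matrix.diagonal_apply, M, star_mul']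
      by_cases hik : i = k <;> by_cases hjl : j = l <;>
        simp [hik, hjl, eq_comm, Complex.conj_ofReal] <;>
        (fin_cases l <;> simp [Complex.conj_ofReal])
    · show _ᴴ = _
      ext p q
      simp only [Matrix.conjTranspose_apply, Matrix.smul_apply, Matrix.vecMulVec_apply,
        Pi.star_apply, star_smul, star_mul', star_star]
      simp [mul_comm, Complex.conj_ofReal]
  · intro x
    simp only [dotProduct, mulVec, Fintype.sum_prod_type, Fin.sum_univ_three,
      Matrix.sub_apply, kroneckerMap_apply, Matrix.one_apply, Matrix.smul_apply,
      vecMulVec_apply, Pi.star_apply, M, ψ, Matrix.diagonal_apply,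
      Matrix.cons_val_zero, Matrix.cons_val_one, Matrix.head_cons, Matrix.cons_val_two,
      Matrix.tail_cons, RCLike.star_def, Complex.conj_ofReal]
    norm_num [Fin.ext_iff]
    rw [Complex.le_def]
    refine ⟨?_, ?_⟩
    · simp only [Complex.add_re, Complex.mul_re, Complex.mul_im, Complex.sub_re, Complex.sub_im,
        Complex.ofReal_re, Complex.ofReal_im, Complex.conj_re, Complex.conj_im, Complex.neg_re,
        Complex.neg_im, Complex.zero_re, Complex.add_im]
      ring_nf
      rw [hs, hs']
      have hP2 : (t*(Real.sqrt δ * Real.sqrt (1-δ)))^2 = t^2*(δ*(1-δ)) := by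
        rw [mul_pow, mul_pow, hs, hs']
      have hPpq : (t*(Real.sqrt δ * Real.sqrt (1-δ)))^2 ≤ (m0 - t*δ) * (m2 - t*(1-δ)) := by
        rw [hP2]; nlinarith [c3]
      have key := quadaux (m0 - t*δ) (m2 - t*(1-δ)) (t*(Real.sqrt δ * Real.sqrt (1-δ)))
        (x (0,0)).re (x (0,0)).im (x (2,2)).re (x (2,2)).im
        (by linarith) (by linarith)
        (mul_nonneg ht (mul_nonneg (Real.sqrt_nonneg _) (Real.sqrt_nonneg _))) hPpq
      nlinarith [key, mul_nonneg h0 (sq_nonneg (x (1,0)).re), mul_nonneg h0 (sq_nonneg (x (1,0)).im),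
        mul_nonneg h0 (sq_nonneg (x (2,0)).re), mul_nonneg h0 (sq_nonneg (x (2,0)).im),
        mul_nonneg h1 (sq_nonneg (x (0,1)).re), mul_nonneg h1 (sq_nonneg (x (0,1)).im),
        mul_nonneg h1 (sq_nonneg (x (1,1)).re), mul_nonneg h1 (sq_nonneg (x (1,1)).im),
        mul_nonneg h1 (sq_nonneg (x (2,1)).re), mul_nonneg h1 (sq_nonneg (x (2,1)).im),
        mul_nonneg h2 (sq_nonneg (x (0,2)).re), mul_nonneg h2 (sq_nonneg (x (0,2)).im),
        mul_nonneg h2 (sq_nonneg (x (1,2)).re), mul_nonneg h2 (sq_nonneg (x (1,2)).im)]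
    · simp only [Complex.add_re, Complex.mul_re, Complex.mul_im, Complex.sub_re, Complex.sub_im,
        Complex.ofReal_re, Complex.ofReal_im, Complex.conj_re, Complex.conj_im, Complex.neg_re,
        Complex.neg_im, Complex.zero_im, Complex.add_im]
      ring
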